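/- Let V be a free abelian group with a fixed basis, and let a be a basis element. Let Λ̄*V denote the subalgebra of Λ*V generated by the kernel of the augmentation map V → ℤ sending each basis element to 1. Then the map w ↦ a ∧ w restricts to an isomorphism of graded abelian groups from Λ̄*V onto the subgroup a ∧ Λ*V of Λ*V. -/

import Mathlib

open ExteriorAlgebra

/-- Let `V` be a free abelian group with basis `b`, and `a = b i` a
basis element.  Let `Λ̄*V` be the subalgebra of the exterior algebra `Λ*V` (over ℤ)
generated by the kernel of the augmentation map `V → ℤ` sending each basis element
to `1`.  Then the map `w ↦ a ∧ w` restricts to a bijection (an isomorphism of abelian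
groups, since the map is additive) from `Λ̄*V` onto the subgroup `a ∧ Λ*V ⊆ Λ*V`. -/
theorem stmt10 {ι V : Type*} [AddCommGroup V]
    (b : Module.Basis ι ℤ V) (i : ι)
    (aug : V →ₗ[ℤ] ℤ) (haug : ∀ k, aug (b k) = 1) :
    Set.InjOn (fun w => ExteriorAlgebra.ι ℤ (b i) * w)
        (Algebra.adjoin ℤ (⇑(ExteriorAlgebra.ι ℤ (M := V)) '' ↑(LinearMap.ker aug)) :
          Set (ExteriorAlgebra ℤ V)) ∧
      (fun w => ExteriorAlgebra.ι ℤ (b i) * w) ''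
          (Algebra.adjoin ℤ (⇑(ExteriorAlgebra.ι ℤ (M := V)) '' ↑(LinearMap.ker aug)) :
            Set (ExteriorAlgebra ℤ V)) =
        {x | ∃ w : ExteriorAlgebra ℤ V, x = ExteriorAlgebra.ι ℤ (b i) * w} := by
  set a : V := b i with ha
  set A : Subalgebra ℤ (ExteriorAlgebra ℤ V) :=
    Algebra.adjoin ℤ (⇑(ExteriorAlgebra.ι ℤ (M := V)) '' ↑(LinearMap.ker aug)) with hA
  set D : ExteriorAlgebra ℤ V →ₗ[ℤ] ExteriorAlgebra ℤ V :=
    CliffordAlgebra.contractLeft (Q := (0 : QuadraticForm ℤ V)) aug with hD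
  have hDι : ∀ (v : V) (x : ExteriorAlgebra ℤ V),
      D (ExteriorAlgebra.ι ℤ v * x) = aug v • x - ExteriorAlgebra.ι ℤ v * D x :=
    fun v x => CliffordAlgebra.contractLeft_ι_mul (Q := (0 : QuadraticForm ℤ V)) aug v x
  have hD1 : D (1 : ExteriorAlgebra ℤ V) = 0 := CliffordAlgebra.contractLeft_one _ _
  -- D vanishes on A
  have key : ∀ x ∈ A, ∀ m : ExteriorAlgebra ℤ V, D m = 0 → D (x * m) = 0 := by
    intro x hx
    induction hx using Algebra.adjoin_induction with
    | mem y hy =>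
      obtain ⟨k, hk, rfl⟩ := hy
      intro m hm
      rw [hDι, LinearMap.mem_ker.mp hk, zero_smul, hm, mul_zero, zero_sub, neg_zero]
    | algebraMap r =>
      intro m hm
      rw [Algebra.algebraMap_eq_smul_one, smul_mul_assoc, one_mul, map_smul, hm, smul_zero]
    | add x y hx hy ihx ihy =>
      intro m hm
      rw [add_mul, map_add, ihx m hm, ihy m hm, add_zero]
    | mul x y hx hy ihx ihy =>
      intro m hm
      rw [mul_assoc]
      exact ihx _ (ihy m hm)
  have hDA : ∀ x ∈ A, D x = 0 := fun x hx => by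
    simpa using key x hx 1 hD1
  have hinv : ∀ x ∈ A, D (ExteriorAlgebra.ι ℤ a * x) = x := by
    intro x hx
    rw [hDι, haug, one_smul, hDA x hx, mul_zero, sub_zero]
  constructor
  · intro x hx y hy hxy
    simp only at hxy
    rw [← hinv x hx, ← hinv y hy, hxy]
  · ext x
    simp only [Set.mem_image, Set.mem_setOf_eq, SetLike.mem_coe]
    constructor
    · rintro ⟨w, hw, rfl⟩
      exact ⟨w, rfl⟩
    · rintro ⟨w, rfl⟩
      -- decompose w
      set T : Submodule ℤ (ExteriorAlgebra ℤ V) :=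
        A.toSubmodule ⊔ Submodule.map (LinearMap.mulLeft ℤ (ExteriorAlgebra.ι ℤ a))
          A.toSubmodule with hT
      have hmulT : ∀ (v : V), ∀ t ∈ T, ExteriorAlgebra.ι ℤ v * t ∈ T := by
        intro v t ht
        obtain ⟨u, hu, x, hx, rfl⟩ := Submodule.mem_sup.mp ht
        obtain ⟨u', hu', rfl⟩ := hx
        have hk : v - aug v • a ∈ LinearMap.ker aug := by
          rw [LinearMap.mem_ker, map_sub, map_smul, haug, smul_eq_mul, mul_one, sub_self]
        have hιk : ExteriorAlgebra.ι ℤ (v - aug v • a) ∈ A :=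
          Algebra.subset_adjoin ⟨_, hk, rfl⟩
        have hv : ExteriorAlgebra.ι ℤ v
            = ExteriorAlgebra.ι ℤ (v - aug v • a) + aug v • ExteriorAlgebra.ι ℤ a := by
          rw [map_sub, map_smul, sub_add_cancel]
        simp only [LinearMap.mulLeft_apply]
        rw [mul_add, hv]
        apply Submodule.add_mem
        · rw [add_mul]
          apply Submodule.add_mem
          · exact Submodule.mem_sup_left (A.mul_mem hιk hu)
          · rw [smul_mul_assoc]
            exact Submodule.smul_mem _ _
              (Submodule.mem_sup_right ⟨u, hu, rfl⟩)
        · rw [add_mul, smul_mul_assoc, ← mul_assoc, ← mul_assoc, ι_sq_zero, zero_mul,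
            smul_zero, add_zero]
          have hswap : ExteriorAlgebra.ι ℤ (v - aug v • a) * ExteriorAlgebra.ι ℤ a
              = -(ExteriorAlgebra.ι ℤ a * ExteriorAlgebra.ι ℤ (v - aug v • a)) := by
            rw [eq_neg_iff_add_eq_zero]
            exact ι_add_mul_swap _ _
          rw [hswap, neg_mul, mul_assoc]
          exact Submodule.neg_mem _
            (Submodule.mem_sup_right ⟨_, A.mul_mem hιk hu', rfl⟩)
      have hTtop : ∀ x : ExteriorAlgebra ℤ V, x ∈ T := by
        have hP : ∀ x : ExteriorAlgebra ℤ V, ∀ t ∈ T, x * t ∈ T := by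
          intro x
          induction x using CliffordAlgebra.induction with
          | algebraMap r =>
            intro t ht
            rw [Algebra.algebraMap_eq_smul_one, smul_mul_assoc, one_mul]
            exact Submodule.smul_mem _ _ ht
          | ι v => exact hmulT v
          | mul x y ihx ihy =>
            intro t ht
            rw [mul_assoc]
            exact ihx _ (ihy t ht)
          | add x y ihx ihy =>
            intro t ht
            rw [add_mul]
            exact Submodule.add_mem _ (ihx t ht) (ihy t ht)
        intro x
        have h1 : (1 : ExteriorAlgebra ℤ V) ∈ T := Submodule.mem_sup_left A.one_mem
        simpa using hP x 1 h1
      obtain ⟨u, hu, x, hx, rfl⟩ := Submodule.mem_sup.mp (hTtop w)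
      obtain ⟨u', hu', rfl⟩ := hx
      refine ⟨u, hu, ?_⟩
      simp only [LinearMap.mulLeft_apply]
      rw [mul_add, ← mul_assoc, ι_sq_zero, zero_mul, add_zero]
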